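/- For every positive integer k, writing points of ℝ²∖{0} in polar coordinates (r, θ), the quadratic form Q_k(X) := (X v_k)² − v_k·(Hess v_k)(X, X) with v_k(z) = Im(z^k) satisfies the identity Q_k = (1/k)·(dv_k)² + k(k−1)·r^{2k}·(dθ)² as quadratic forms on tangent vectors. -/

import Mathlib

open Complex Real

/-- Directional derivative of `f : ℂ → ℝ` at `z` in direction `w`. -/
noncomputable def pd (w : ℂ) (f : ℂ → ℝ) (z : ℂ) : ℝ := fderiv ℝ f z w

/-- Laplacian. -/
noncomputable def lap (f : ℂ → ℝ) (z : ℂ) : ℝ :=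
  pd 1 (pd 1 f) z + pd Complex.I (pd Complex.I f) z

/-- Inner product of the gradients of `f` and `g` at `z`. -/
noncomputable def gradInner (f g : ℂ → ℝ) (z : ℂ) : ℝ :=
  pd 1 f z * pd 1 g z + pd Complex.I f z * pd Complex.I g z

/-- `|∇f|²` at `z`. -/
noncomputable def gradSq (f : ℂ → ℝ) (z : ℂ) : ℝ := gradInner f f z

/-- Hessian bilinear form of `f` at `z` evaluated on directions `X, Y`. -/
noncomputable def hess (f : ℂ → ℝ) (X Y : ℂ) (z : ℂ) : ℝ := pd Y (pd X f) z

/-- Sum of squares of the entries of the Hessian matrix of `f` at `z`. -/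
noncomputable def hessSq (f : ℂ → ℝ) (z : ℂ) : ℝ :=
  (hess f 1 1 z) ^ 2 + (hess f 1 Complex.I z) ^ 2 +
    (hess f Complex.I 1 z) ^ 2 + (hess f Complex.I Complex.I z) ^ 2

/-- The open disk of radius 2 centered at the origin. -/
def B2 : Set ℂ := Metric.ball 0 2

/-- Harmonic on a set: `C²` and the Laplacian vanishes there. -/
noncomputable def HarmOn (f : ℂ → ℝ) (s : Set ℂ) : Prop :=
  ContDiffOn ℝ 2 f s ∧ ∀ z ∈ s, lap f z = 0

/-- `v_k(z) = Im (z^k)`. -/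
noncomputable def vk (k : ℕ) (z : ℂ) : ℝ := (z ^ k).im

lemma fderiv_im_mul_pow (c : ℂ) (n : ℕ) (z X : ℂ) :
    fderiv ℝ (fun w => (c * w ^ n).im) z X = (c * n * z ^ (n-1) * X).im := by
  have h : HasDerivAt (fun w : ℂ => c * w ^ n) (c * (n * z ^ (n-1))) z :=
    (hasDerivAt_pow n z).const_mul c
  have h2 := Complex.imCLM.hasFDerivAt.comp z (h.hasFDerivAt.restrictScalars ℝ)
  have h3 : HasFDerivAt (fun w => (c * w ^ n).im)
      (Complex.imCLM.comp (ContinuousLinearMap.restrictScalars ℝ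
        (ContinuousLinearMap.smulRight 1 (c * (↑n * z ^ (n - 1)))))) z := h2
  rw [h3.fderiv]
  simp [smul_eq_mul]
  ring

lemma vk_eq (k : ℕ) : vk k = fun w => ((1:ℂ) * w ^ k).im := by
  funext w; simp [vk]

lemma fderiv_vk (k : ℕ) (z X : ℂ) :
    fderiv ℝ (vk k) z X = ((k:ℂ) * z ^ (k-1) * X).im := by
  rw [vk_eq, fderiv_im_mul_pow]; ring_nf

lemma pd_vk (k : ℕ) (X : ℂ) :
    pd X (vk k) = fun w => (((k:ℂ) * X) * w ^ (k-1)).im := by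
  funext w
  show fderiv ℝ (vk k) w X = _
  rw [fderiv_vk]
  congr 1; ring

lemma hess_vk (k : ℕ) (hk : 1 ≤ k) (z X : ℂ) :
    hess (vk k) X X z = (((k:ℂ) * X) * ((k:ℝ)-1) * z ^ (k-2) * X).im := by
  show fderiv ℝ (pd X (vk k)) z X = _
  rw [pd_vk, fderiv_im_mul_pow, show k-1-1 = k-2 by omega, Nat.cast_sub hk]
  push_cast
  ring_nf

lemma alg_id (w z X : ℂ) :
    ((w * z * X).im) ^ 2 - (w * (z * z)).im * (w * (X * X)).im =
      Complex.normSq w * (z.re * X.im - z.im * X.re) ^ 2 := by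
  simp only [Complex.mul_im, Complex.mul_re, Complex.normSq_apply]
  ring

theorem stmt3 (k : ℕ) (hk : 1 ≤ k) :
    ∀ z : ℂ, z ≠ 0 → ∀ X : ℂ,
      (fderiv ℝ (vk k) z X) ^ 2 - vk k z * hess (vk k) X X z =
        (1 / (k : ℝ)) * (fderiv ℝ (vk k) z X) ^ 2
          + (k : ℝ) * ((k : ℝ) - 1) * ‖z‖ ^ (2 * k) *
            ((z.re * X.im - z.im * X.re) / ‖z‖ ^ 2) ^ 2 := by
  intro z hz X
  rcases eq_or_lt_of_le hk with h1 | h2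
  · -- k = 1
    subst h1
    rw [fderiv_vk, hess_vk 1 le_rfl]
    norm_num
  · have h2' : 2 ≤ k := h2
    set w := z ^ (k-2) with hw
    set s := ‖z‖ with hs
    set a := (w * z * X).im with ha
    set b := (w * (X * X)).im with hb
    set v := (w * (z * z)).im with hv
    set D := z.re * X.im - z.im * X.re with hD
    have hs0 : s ≠ 0 := by simpa [hs] using hz
    have hk0 : (k : ℝ) ≠ 0 := by positivity
    have e1 : z ^ (k-1) = w * z := by rw [hw, ← pow_succ]; congr 1; omega
    have e2 : z ^ k = w * (z * z) := by
      rw [hw, ← mul_assoc, ← pow_succ, ← pow_succ]; congr 1; omega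
    have hf : fderiv ℝ (vk k) z X = (k:ℝ) * a := by
      rw [fderiv_vk, e1, show (k:ℂ) * (w * z) * X = (k:ℂ) * (w * z * X) by ring]
      simp [ha]
    have hh : hess (vk k) X X z = (k:ℝ) * ((k:ℝ) - 1) * b := by
      rw [hess_vk k hk, show (k:ℂ) * X * (((k:ℝ):ℂ) - 1) * z ^ (k-2) * X =
        (((k:ℝ) * ((k:ℝ) - 1) : ℝ) : ℂ) * (z ^ (k-2) * (X * X)) by push_cast; ring]
      simp [hb, hw]
    have hvk : vk k z = v := by rw [vk, e2, hv]
    have halg : a ^ 2 - v * b = Complex.normSq w * D ^ 2 := alg_id w z X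
    have hN : Complex.normSq w = s ^ (2 * (k - 2)) := by
      rw [hw, Complex.normSq_eq_norm_sq, hs, norm_pow, ← pow_mul, mul_comm]
    have hpow : s ^ (2 * k) = s ^ (2 * (k - 2)) * s ^ 4 := by
      rw [← pow_add]; congr 1; omega
    have hfrac : s ^ (2 * k) * (D / s ^ 2) ^ 2 = Complex.normSq w * D ^ 2 := by
      rw [hpow, hN, div_pow]
      field_simp
    rw [hf, hh, hvk,
      show (1/(k:ℝ)) * ((k:ℝ) * a) ^ 2 = (k:ℝ) * a ^ 2 by field_simp]
    linear_combination ((k:ℝ) * ((k:ℝ) - 1)) * halg - ((k:ℝ) * ((k:ℝ) - 1)) * hfrac
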